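/- Let g be the Lie algebra with basis e_1,...,e_{2n} and Chevalley–Eilenberg differential determined by d e^1 = d e^{2n} = 0, d e^i = b_i e^i ∧ e^{2n} and d e^{i+n-1} = -b_i e^{i+n-1} ∧ e^{2n} for 2 ≤ i ≤ n. Then the 2-form ω = e^1 ∧ e^{2n} + Σ_{i=2}^n e^i ∧ e^{i+n-1} is closed, and ω^n = n! · e^1 ∧ e^2 ∧ e^{n+1} ∧ e^3 ∧ e^{n+2} ∧ ... ≠ 0, so ω is a symplectic form on g. -/

import Mathlib

variable {A : Type*} [Ring A] [Algebra ℝ A]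

lemma my_binom (x y : A) (h : Commute x y) (hx : x * x = 0) :
    ∀ m : ℕ, (x + y) ^ m = y ^ m + (m : ℝ) • (x * y ^ (m - 1)) := by
  intro m
  induction m with
  | zero => simp
  | succ m ih =>
    rcases m with _ | k
    · simp [add_comm]
    · have e1 : y ^ (k + 1) * x = x * y ^ (k + 1) := (h.pow_right (k + 1)).eq.symm
      have e2 : x * y ^ k * x = 0 := by
        rw [mul_assoc, ← (h.pow_right k).eq, ← mul_assoc, hx, zero_mul]
      calc (x + y) ^ (k + 1 + 1)
          = (y ^ (k + 1) + ((k:ℝ) + 1) • (x * y ^ k)) * (x + y) := by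
            rw [pow_succ, ih]; push_cast; ring_nf
        _ = y ^ (k + 1) * x + y ^ (k + 1) * y
            + (((k:ℝ) + 1) • (x * y ^ k * x) + ((k:ℝ) + 1) • (x * y ^ k * y)) := by
            rw [add_mul, mul_add, mul_add, smul_mul_assoc, smul_mul_assoc]
        _ = y ^ (k + 1 + 1) + ((k + 1 + 1 : ℕ) : ℝ) • (x * y ^ (k + 1 + 1 - 1)) := by
            rw [e1, e2, smul_zero, zero_add, mul_assoc, ← pow_succ, ← pow_succ]
            push_cast
            module

lemma my_list_pow (l : List A) (hc : l.Pairwise Commute) (hsq : ∀ a ∈ l, a * a = 0) :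
    l.sum ^ l.length = (l.length.factorial : ℝ) • l.prod ∧ l.sum ^ (l.length + 1) = 0 := by
  induction l with
  | nil => simp
  | cons x t ih =>
    rw [List.pairwise_cons] at hc
    obtain ⟨hxt, hc'⟩ := hc
    have hsx : x * x = 0 := hsq x (by simp)
    have hsq' : ∀ a ∈ t, a * a = 0 := fun a ha => hsq a (by simp [ha])
    obtain ⟨ih1, ih2⟩ := ih hc' hsq'
    have hcs : Commute x t.sum := Commute.list_sum_right _ _ hxt
    constructor
    · rw [List.length_cons, List.sum_cons, my_binom x t.sum hcs hsx (t.length + 1),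
        Nat.add_sub_cancel, ih2, ih1, zero_add, mul_smul_comm, smul_smul,
        List.prod_cons]
      congr 1
      rw [← Nat.cast_mul, ← Nat.factorial_succ]
    · rw [List.length_cons, List.sum_cons,
        my_binom x t.sum hcs hsx (t.length + 1 + 1), Nat.add_sub_cancel,
        pow_succ, ih2, zero_mul, mul_zero, smul_zero, add_zero]

lemma my_pairwise {l : List A} (P : A → Prop) (h : ∀ a ∈ l, P a)
    (hcom : ∀ a b, P a → P b → Commute a b) : l.Pairwise Commute := by
  induction l with
  | nil => exact List.Pairwise.nil
  | cons x t ih =>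
    rw [List.pairwise_cons]
    exact ⟨fun a ha => hcom x a (h x (by simp)) (h a (by simp [ha])),
      ih fun a ha => h a (by simp [ha])⟩


def gfun (n : ℕ) : ℕ → ℕ := fun k =>
  if k = 0 then 0 else if k = 1 then 2 * n - 1
  else if k % 2 = 0 then k / 2 else k / 2 + n - 1

lemma gfun_lt (n k : ℕ) (hn : 2 ≤ n) (hk : k < 2 * n) : gfun n k < 2 * n := by
  unfold gfun; split_ifs <;> (try omega) <;> exact (‹False›).elim

lemma gfun_inj (n k l : ℕ) (hn : 2 ≤ n) (hk : k < 2 * n) (hl : l < 2 * n)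
    (h : gfun n k = gfun n l) : k = l := by
  unfold gfun at h; split_ifs at h <;> omega

lemma gfun_even (n m : ℕ) (hn : 2 ≤ n) : gfun n (2 + 2 * m) = m + 1 := by
  unfold gfun; split_ifs <;> (try omega) <;> exact (‹False›).elim

lemma gfun_odd (n m : ℕ) (hn : 2 ≤ n) : gfun n (2 + 2 * m + 1) = m + n := by
  unfold gfun; split_ifs <;> (try omega) <;> exact (‹False›).elim

set_option maxHeartbeats 1000000 in
theorem omega_closed_and_top_power (n : ℕ) (hn : 2 ≤ n) (b : ℕ → ℝ)
    (d : ExteriorAlgebra ℝ (Fin (2 * n) → ℝ) →ₗ[ℝ] ExteriorAlgebra ℝ (Fin (2 * n) → ℝ)) :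
    ∀ u : ℕ → ExteriorAlgebra ℝ (Fin (2 * n) → ℝ),
    (u = fun i => if h : i < 2 * n then
        ExteriorAlgebra.ι ℝ (Pi.single (⟨i, h⟩ : Fin (2 * n)) (1 : ℝ)) else 0) →
    (∀ v : Fin (2 * n) → ℝ, ∀ x, d (ExteriorAlgebra.ι ℝ v * x) =
        d (ExteriorAlgebra.ι ℝ v) * x - ExteriorAlgebra.ι ℝ v * d x) →
    d (u 0) = 0 → d (u (2 * n - 1)) = 0 →
    (∀ i : ℕ, 1 ≤ i → i ≤ n - 1 → d (u i) = b (i + 1) • (u i * u (2 * n - 1))) →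
    (∀ i : ℕ, n ≤ i → i ≤ 2 * n - 2 → d (u i) = -(b (i - n + 2)) • (u i * u (2 * n - 1))) →
    ∀ ω : ExteriorAlgebra ℝ (Fin (2 * n) → ℝ),
    (ω = u 0 * u (2 * n - 1) + ∑ j ∈ Finset.Icc 1 (n - 1), u j * u (j + n - 1)) →
    d ω = 0 ∧
    ω ^ n = (n.factorial : ℝ) •
      (u 0 * u (2 * n - 1) * ((List.range (n - 1)).map (fun j => u (j + 1) * u (j + n))).prod) ∧
    ω ^ n ≠ 0 := by
  intro u hu hd h0 h2n h5 h6 ω hω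
  have hu_lt : ∀ i (h : i < 2 * n),
      u i = ExteriorAlgebra.ι ℝ (Pi.single (⟨i, h⟩ : Fin (2 * n)) (1 : ℝ)) := by
    intro i h; rw [hu]; simp [h]
  have hu_ge : ∀ i, 2 * n ≤ i → u i = 0 := by
    intro i h; rw [hu]; simp [Nat.not_lt.mpr h]
  -- anticommutation
  have hanti : ∀ a c, u a * u c = -(u c * u a) := by
    intro a c
    by_cases ha : a < 2 * n
    · by_cases hc : c < 2 * n
      · rw [hu_lt a ha, hu_lt c hc]
        exact eq_neg_of_add_eq_zero_left (ExteriorAlgebra.ι_add_mul_swap _ _)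
      · rw [hu_ge c (Nat.not_lt.mp hc)]; simp
    · rw [hu_ge a (Nat.not_lt.mp ha)]; simp
  have hsq : ∀ a, u a * u a = 0 := by
    intro a
    by_cases ha : a < 2 * n
    · rw [hu_lt a ha]; exact ExteriorAlgebra.ι_sq_zero _
    · rw [hu_ge a (Nat.not_lt.mp ha)]; simp
  have hpair_sq : ∀ a c, (u a * u c) * (u a * u c) = 0 := by
    intro a c
    rw [← mul_assoc, mul_assoc (u a) (u c) (u a), hanti c a, mul_neg, ← mul_assoc,
      hsq, zero_mul, neg_zero, zero_mul]
  have hmove : ∀ x a c, u x * (u a * u c) = (u a * u c) * u x := by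
    intro x a c
    rw [← mul_assoc, hanti x a, neg_mul, mul_assoc, hanti x c, mul_neg, neg_neg,
      mul_assoc]
  have hpair_comm : ∀ a c a' c', Commute (u a * u c) (u a' * u c') := by
    intro a c a' c'
    show _ = _
    calc u a * u c * (u a' * u c')
        = u a * (u c * (u a' * u c')) := by rw [mul_assoc]
      _ = u a * ((u a' * u c') * u c) := by rw [hmove]
      _ = (u a * (u a' * u c')) * u c := by rw [← mul_assoc]
      _ = ((u a' * u c') * u a) * u c := by rw [hmove]
      _ = (u a' * u c') * (u a * u c) := by rw [mul_assoc]
  -- the list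
  set L : List (ExteriorAlgebra ℝ (Fin (2 * n) → ℝ)) :=
    (u 0 * u (2 * n - 1)) :: (List.range (n - 1)).map (fun j => u (j + 1) * u (j + n))
    with hL
  have hmemL : ∀ a ∈ L, ∃ i j, a = u i * u j := by
    intro a ha
    rw [hL, List.mem_cons] at ha
    rcases ha with ha | ha
    · exact ⟨0, 2 * n - 1, ha⟩
    · obtain ⟨j, _, rfl⟩ := List.mem_map.mp ha
      exact ⟨j + 1, j + n, rfl⟩
  have hLc : L.Pairwise Commute := by
    refine my_pairwise (fun a => ∃ i j, a = u i * u j) hmemL ?_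
    rintro a b ⟨i, j, rfl⟩ ⟨i', j', rfl⟩
    exact hpair_comm i j i' j'
  have hLsq : ∀ a ∈ L, a * a = 0 := by
    intro a ha
    obtain ⟨i, j, rfl⟩ := hmemL a ha
    exact hpair_sq i j
  have hLlen : L.length = n := by
    rw [hL]; simp; omega
  have hLsum : L.sum = ω := by
    rw [hL, List.sum_cons, hω]
    congr 1
    have key : ∀ m, ((List.range m).map (fun j => u (j + 1) * u (j + n))).sum
        = ∑ j ∈ Finset.range m, u (j + 1) * u (j + n) := by
      intro m
      induction m with
      | zero => simp
      | succ m ih => rw [List.range_succ, Finset.sum_range_succ, List.map_append,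
          List.sum_append, ih]; simp
    rw [key, show Finset.Icc 1 (n - 1) = Finset.Ico 1 n by
        rw [← Finset.Ico_add_one_right_eq_Icc, show n - 1 + 1 = n by omega],
      Finset.sum_Ico_eq_sum_range, show n - 1 = n - 1 by rfl]
    apply Finset.sum_congr rfl
    intro j _
    congr 2 <;> omega
  obtain ⟨hpow, -⟩ := my_list_pow L hLc hLsq
  rw [hLsum, hLlen] at hpow
  rw [hL, List.prod_cons] at hpow
  -- part 1 : d ω = 0
  have hdδ : d (u 0 * u (2 * n - 1)) = 0 := by
    rw [hu_lt 0 (by omega), hd, ← hu_lt 0 (by omega), h0, h2n, zero_mul, mul_zero,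
      sub_zero]
  have hdγ : ∀ j, 1 ≤ j → j ≤ n - 1 → d (u j * u (j + n - 1)) = 0 := by
    intro j h1 h2
    have hj : j < 2 * n := by omega
    have hdj := h5 j h1 h2
    have hdj' := h6 (j + n - 1) (by omega) (by omega)
    rw [show j + n - 1 - n + 2 = j + 1 by omega] at hdj'
    rw [hu_lt j hj, hd, ← hu_lt j hj, hdj, hdj', smul_mul_assoc, mul_smul_comm,
      neg_smul, sub_neg_eq_add, mul_assoc, hanti (2 * n - 1) (j + n - 1), mul_neg]
    simp
  constructor
  · rw [hω, map_add, map_sum, hdδ, zero_add]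
    apply Finset.sum_eq_zero
    intro j hj
    rw [Finset.mem_Icc] at hj
    exact hdγ j hj.1 hj.2
  refine ⟨hpow, ?_⟩
  -- part 3 : nonzero
  rw [hpow]
  have stepA : ∀ m, ((List.range (2 + 2 * m)).map (fun k => u (gfun n k))).prod
      = u 0 * u (2 * n - 1) * ((List.range m).map (fun j => u (j + 1) * u (j + n))).prod := by
    intro m
    induction m with
    | zero =>
      have e0 : gfun n 0 = 0 := by unfold gfun; simp
      have e1 : gfun n 1 = 2 * n - 1 := by unfold gfun; simp
      simp [List.range_succ, e0, e1]
    | succ m ih =>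
      have e1 := gfun_even n m hn
      have e2 := gfun_odd n m hn
      rw [show 2 + 2 * (m + 1) = 2 + 2 * m + 1 + 1 by omega]
      simp only [List.range_succ, List.map_append, List.prod_append, ih, e1, e2,
        List.map_cons, List.map_nil, List.prod_cons, List.prod_nil]
      simp [mul_assoc]
  have hbound : ∀ k : Fin (2 * n), gfun n k.val < 2 * n :=
    fun k => gfun_lt n k.val hn k.isLt
  set v : Fin (2 * n) → (Fin (2 * n) → ℝ) :=
    fun k => Pi.single (⟨gfun n k.val, hbound k⟩ : Fin (2 * n)) (1 : ℝ) with hv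
  have stepB : ((List.range (2 * n)).map (fun k => u (gfun n k))).prod
      = ExteriorAlgebra.ιMulti ℝ (2 * n) v := by
    rw [ExteriorAlgebra.ιMulti_apply]
    congr 1
    apply List.ext_getElem
    · simp
    · intro i h1 h2
      simp only [List.getElem_map, List.getElem_range, List.getElem_ofFn]
      rw [hu_lt (gfun n i) (gfun_lt n i hn (by simpa using h1))]
  have hiM : u 0 * u (2 * n - 1)
      * ((List.range (n - 1)).map (fun j => u (j + 1) * u (j + n))).prod
      = ExteriorAlgebra.ιMulti ℝ (2 * n) v := by
    calc u 0 * u (2 * n - 1)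
        * ((List.range (n - 1)).map (fun j => u (j + 1) * u (j + n))).prod
        = ((List.range (2 + 2 * (n - 1))).map (fun k => u (gfun n k))).prod :=
          (stepA (n - 1)).symm
      _ = ((List.range (2 * n)).map (fun k => u (gfun n k))).prod := by
          rw [show 2 + 2 * (n - 1) = 2 * n by omega]
      _ = ExteriorAlgebra.ιMulti ℝ (2 * n) v := stepB
  have hfin : ∀ k l : Fin (2 * n),
      ((⟨gfun n k.val, hbound k⟩ : Fin (2 * n)) = ⟨gfun n l.val, hbound l⟩) ↔ k = l := by
    intro k l
    constructor
    · intro h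
      exact Fin.ext (gfun_inj n _ _ hn k.isLt l.isLt (congrArg Fin.val h))
    · rintro rfl; rfl
  have hMM : Matrix.of v * Matrix.transpose (Matrix.of v) = 1 := by
    ext k l
    simp only [Matrix.mul_apply, Matrix.transpose_apply, Matrix.of_apply, Matrix.one_apply, hv,
      Pi.single_apply, ite_mul, one_mul, zero_mul, Finset.sum_ite_eq, Finset.mem_univ, if_true]
    simp [hfin k l]
  have hdet : Matrix.det (Matrix.of v) ≠ 0 := by
    intro h
    have h2 := congrArg Matrix.det hMM
    rw [Matrix.det_mul, Matrix.det_transpose, Matrix.det_one, h, mul_zero] at h2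
    exact zero_ne_one h2
  set F := ExteriorAlgebra.liftAlternating (R := ℝ) (M := Fin (2 * n) → ℝ) (N := ℝ)
    (Function.update (fun i => (0 : (Fin (2 * n) → ℝ) [⋀^Fin i]→ₗ[ℝ] ℝ)) (2 * n)
      Matrix.detRowAlternating) with hF
  have hFP : F (ExteriorAlgebra.ιMulti ℝ (2 * n) v) = Matrix.det (Matrix.of v) := by
    rw [hF, ExteriorAlgebra.liftAlternating_apply_ιMulti, Function.update_self]
    rfl
  intro h
  have hF0 : F ((n.factorial : ℝ) •
      (u 0 * u (2 * n - 1)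
        * ((List.range (n - 1)).map (fun j => u (j + 1) * u (j + n))).prod)) = 0 := by
    rw [h, map_zero]
  rw [map_smul, hiM, hFP, smul_eq_mul] at hF0
  have hfac : (n.factorial : ℝ) ≠ 0 := by exact_mod_cast n.factorial_ne_zero
  rcases mul_eq_zero.mp hF0 with h' | h'
  · exact hfac h'
  · exact hdet h'
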